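/- Let N ≥ 3, 0 < m < 1, σ > 0, 1 < p < p_L(σ), p ≠ p_s(σ). Consider the planar system in variables (T,Z): Ṫ = -((N-2)(p-p_s(σ))/(p-m)) T - (m/(p-m)) T² - (p-m) Z + (N-2)(p-p_c(σ))(σ+2)/(p-m), Ż = TZ, on the half-plane Z > 0. Then with a = (3m-p)/(p-m), the divergence of the vector field multiplied by Z^a equals -((N-2)(p-p_s(σ))/(p-m)) Z^a, which has constant sign on {Z>0}; hence by the Dulac criterion the system has no periodic orbits in {Z > 0}. -/
import Mathlib


theorem dulac_divergence_identity (N : ℕ) (hN : 3 ≤ N) (m σ p a ps pc : ℝ)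
    (hm0 : 0 < m) (hm1 : m < 1) (hσ : 0 < σ) (hp1 : 1 < p)
    (hpL : p < 1 + σ * (1 - m) / 2)
    (hps : ps = m * ((N : ℝ) + 2 * σ + 2) / ((N : ℝ) - 2))
    (hpc : pc = m * ((N : ℝ) + σ) / ((N : ℝ) - 2))
    (hpne : p ≠ ps) (ha : a = (3 * m - p) / (p - m)) :
    ∀ T Z : ℝ, 0 < Z →
      (deriv (fun T' => Z ^ a * (-(((N : ℝ) - 2) * (p - ps) / (p - m)) * T'
            - (m / (p - m)) * T' ^ 2 - (p - m) * Z
            + ((N : ℝ) - 2) * (p - pc) * (σ + 2) / (p - m))) T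
        + deriv (fun Z' => Z' ^ a * (T * Z')) Z
        = -(((N : ℝ) - 2) * (p - ps) / (p - m)) * Z ^ a) ∧
      -(((N : ℝ) - 2) * (p - ps) / (p - m)) * Z ^ a ≠ 0 := by
  intro T Z hZ
  have hpm : 0 < p - m := by linarith
  have hN2 : (0:ℝ) < (N : ℝ) - 2 := by
    have : (3:ℝ) ≤ (N : ℝ) := by exact_mod_cast hN
    linarith
  set c : ℝ := ((N : ℝ) - 2) * (p - ps) / (p - m) with hc
  -- first derivative
  have h1 : HasDerivAt (fun T' => Z ^ a * (-c * T'
      - (m / (p - m)) * T' ^ 2 - (p - m) * Z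
      + ((N : ℝ) - 2) * (p - pc) * (σ + 2) / (p - m)))
      (Z ^ a * (-c - (m / (p - m)) * (2 * T))) T := by
    have hT : HasDerivAt (fun T' : ℝ => -c * T'
        - (m / (p - m)) * T' ^ 2 - (p - m) * Z
        + ((N : ℝ) - 2) * (p - pc) * (σ + 2) / (p - m))
        (-c - (m / (p - m)) * (2 * T)) T := by
      have h1 : HasDerivAt (fun T' : ℝ => -c * T') (-c) T := by
        simpa using (hasDerivAt_id T).const_mul (-c)
      have h2 : HasDerivAt (fun T' : ℝ => (m / (p - m)) * T' ^ 2)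
          ((m / (p - m)) * (2 * T)) T := by
        have := ((hasDerivAt_pow 2 T).const_mul (m / (p - m)))
        simpa [pow_one, mul_comm, mul_assoc, mul_left_comm] using this
      simpa using ((h1.sub h2).sub_const ((p - m) * Z)).add_const
        (((N : ℝ) - 2) * (p - pc) * (σ + 2) / (p - m))
    simpa using hT.const_mul (Z ^ a)
  -- second derivative
  have h2 : deriv (fun Z' : ℝ => Z' ^ a * (T * Z')) Z = T * ((a + 1) * Z ^ a) := by
    have heq : (fun Z' : ℝ => Z' ^ a * (T * Z')) =ᶠ[nhds Z]
        (fun Z' : ℝ => T * Z' ^ (a + 1)) := by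
      filter_upwards [IsOpen.mem_nhds isOpen_Ioi (show Z ∈ Set.Ioi (0:ℝ) from hZ)]
        with x hx
      have hx0 : x ≠ 0 := ne_of_gt hx
      rw [Real.rpow_add_one hx0]
      ring
    rw [heq.deriv_eq]
    have hd : HasDerivAt (fun Z' : ℝ => Z' ^ (a + 1)) ((a + 1) * Z ^ (a + 1 - 1)) Z :=
      Real.hasDerivAt_rpow_const (Or.inl (ne_of_gt hZ))
    have : HasDerivAt (fun Z' : ℝ => T * Z' ^ (a + 1)) (T * ((a + 1) * Z ^ (a + 1 - 1))) Z :=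
      hd.const_mul T
    rw [this.deriv]
    norm_num
  have ha1 : a + 1 = 2 * m / (p - m) := by
    rw [ha]; field_simp; ring
  constructor
  · rw [h1.deriv, h2]
    have : Z ^ a * (-c - m / (p - m) * (2 * T)) + T * ((a + 1) * Z ^ a)
        = -c * Z ^ a + Z ^ a * T * ((a + 1) - 2 * m / (p - m)) := by ring
    rw [this, ha1]
    ring
  · have hZa : (0:ℝ) < Z ^ a := Real.rpow_pos_of_pos hZ a
    have hps0 : p - ps ≠ 0 := sub_ne_zero.mpr hpne
    have : c ≠ 0 := by
      rw [hc]
      exact div_ne_zero (mul_ne_zero (ne_of_gt hN2) hps0) (ne_of_gt hpm)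
    exact mul_ne_zero (neg_ne_zero.mpr this) (ne_of_gt hZa)
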